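/- Let β, b ∈ ℕ^m and A ∈ ℕ^{m×n} with columns A_1,…,A_n satisfy b ≤ β and A_k ≤ β for all 1 ≤ k ≤ n, and let Θ and 𝐛 be as below with s = ∏_j (1+β_j). Then for every invertible matrix M ∈ ℝ^{s×s}, the linear system Ax = b has a solution x ∈ ℕ^n if and only if there exists a real vector 𝐲 ≥ 0 with M·Θ·𝐲 = M·𝐛. -/

import Mathlib

/-- Row index set: vectors `w ∈ ℕ^m` with `w ≤ β` (entrywise). -/
abbrev RowIdx (m : ℕ) (β : Fin m → ℕ) : Type := ∀ j : Fin m, Fin (β j + 1)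

/-- Column index set: pairs `(k, u)` with `1 ≤ k ≤ n` and `u ∈ ℕ^m`, `u ≤ β - A_k`. -/
abbrev ColIdx (m n : ℕ) (β : Fin m → ℕ) (A : Matrix (Fin m) (Fin n) ℕ) : Type :=
  Σ k : Fin n, ∀ j : Fin m, Fin (β j - A j k + 1)

/-- The network matrix `Θ`: `Θ[w;(k,u)] = -1` if `w = u`, `+1` if `w = u + A_k`,
and `0` otherwise. -/
noncomputable def theta (m n : ℕ) (β : Fin m → ℕ) (A : Matrix (Fin m) (Fin n) ℕ) :
    Matrix (RowIdx m β) (ColIdx m n β A) ℝ := Matrix.of fun w c =>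
  if (fun j => (w j : ℕ)) = (fun j => (c.2 j : ℕ)) then -1
  else if (fun j => (w j : ℕ)) = (fun j => (c.2 j : ℕ) + A j c.1) then 1 else 0

/-- The vector `𝐛`: `𝐛[w] = (1 if w = b else 0) - (1 if w = 0 else 0)`. -/
noncomputable def bvec (m : ℕ) (β b : Fin m → ℕ) : RowIdx m β → ℝ := fun w =>
  (if (fun j => (w j : ℕ)) = b then 1 else 0)
    - (if (fun j => (w j : ℕ)) = (fun _ => (0 : ℕ)) then 1 else 0)

namespace Stmt8Aux

variable {m n : ℕ} {β : Fin m → ℕ} {A : Matrix (Fin m) (Fin n) ℕ}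

def mkRow (β : Fin m → ℕ) (v : Fin m → ℕ) (hv : ∀ j, v j ≤ β j) : RowIdx m β :=
  fun j => ⟨v j, Nat.lt_succ_of_le (hv j)⟩

lemma coe_eq_iff (w : RowIdx m β) (v : Fin m → ℕ) (hv : ∀ j, v j ≤ β j) :
    ((fun j => ((w j : ℕ))) = v) ↔ w = mkRow β v hv := by
  constructor
  · intro h; funext j; exact Fin.ext (by simpa [mkRow] using congrFun h j)
  · intro h; subst h; rfl

lemma uRow_le (hA : ∀ k j, A j k ≤ β j) (c : ColIdx m n β A) (j : Fin m) :
    (c.2 j : ℕ) ≤ β j := by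
  have h1 := (c.2 j).isLt; have h2 := hA c.1 j; omega

lemma vRow_le (hA : ∀ k j, A j k ≤ β j) (c : ColIdx m n β A) (j : Fin m) :
    (c.2 j : ℕ) + A j c.1 ≤ β j := by
  have h1 := (c.2 j).isLt; have h2 := hA c.1 j; omega

def uRow (hA : ∀ k j, A j k ≤ β j) (c : ColIdx m n β A) : RowIdx m β :=
  mkRow β (fun j => (c.2 j : ℕ)) (uRow_le hA c)

def vRow (hA : ∀ k j, A j k ≤ β j) (c : ColIdx m n β A) : RowIdx m β :=
  mkRow β (fun j => (c.2 j : ℕ) + A j c.1) (vRow_le hA c)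

lemma theta_apply (hA : ∀ k j, A j k ≤ β j) (w : RowIdx m β) (c : ColIdx m n β A) :
    theta m n β A w c =
      (if w = vRow hA c ∧ uRow hA c ≠ vRow hA c then (1:ℝ) else 0)
        - (if w = uRow hA c then 1 else 0) := by
  show (if (fun j => (w j : ℕ)) = (fun j => (c.2 j : ℕ)) then (-1:ℝ)
    else if (fun j => (w j : ℕ)) = (fun j => (c.2 j : ℕ) + A j c.1) then 1 else 0) = _
  simp only [coe_eq_iff w (fun j => (c.2 j : ℕ)) (uRow_le hA c),
    coe_eq_iff w (fun j => (c.2 j : ℕ) + A j c.1) (vRow_le hA c)]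
  show (if w = uRow hA c then (-1:ℝ) else if w = vRow hA c then 1 else 0) = _
  by_cases h1 : w = uRow hA c
  · have h3 : ¬ (w = vRow hA c ∧ uRow hA c ≠ vRow hA c) :=
      fun ⟨a, b⟩ => b (h1.symm.trans a)
    simp [h1, h3]
  · by_cases h2 : w = vRow hA c
    · have hne : uRow hA c ≠ vRow hA c := fun h => h1 (h2.trans h.symm)
      simp [h1, h2, hne, Ne.symm hne, (fun h => hne (h.symm) : ¬ vRow hA c = uRow hA c)]
    · simp [h1, h2]

lemma bvec_apply (b : Fin m → ℕ) (hb : ∀ j, b j ≤ β j) (w : RowIdx m β) :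
    bvec m β b w = (if w = mkRow β b hb then (1:ℝ) else 0)
      - (if w = mkRow β (fun _ => 0) (fun _ => Nat.zero_le _) then 1 else 0) := by
  show (if (fun j => (w j : ℕ)) = b then (1:ℝ) else 0)
      - (if (fun j => (w j : ℕ)) = (fun _ => (0:ℕ)) then 1 else 0) = _
  simp only [coe_eq_iff w b hb, coe_eq_iff w (fun _ => 0) (fun _ => Nat.zero_le _)]

end Stmt8Aux
namespace Stmt8Aux

variable {m n : ℕ} {β : Fin m → ℕ} {A : Matrix (Fin m) (Fin n) ℕ}

lemma sum_col (hA : ∀ k j, A j k ≤ β j) (f : RowIdx m β → ℝ) (c : ColIdx m n β A) :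
    ∑ w, f w * theta m n β A w c
      = (if uRow hA c ≠ vRow hA c then f (vRow hA c) else 0) - f (uRow hA c) := by
  classical
  simp only [theta_apply hA, mul_sub]
  rw [Finset.sum_sub_distrib]
  congr 1
  · by_cases hne : uRow hA c = vRow hA c
    · simp [hne]
    · simp only [hne, ne_eq, not_false_iff, and_true, if_true, mul_ite, mul_one, mul_zero]
      rw [Finset.sum_ite_eq' Finset.univ (vRow hA c) f]
      simp
  · simp only [mul_ite, mul_one, mul_zero]
    rw [Finset.sum_ite_eq' Finset.univ (uRow hA c) f]
    simp

lemma sum_mul_mulVec (hA : ∀ k j, A j k ≤ β j) (y : ColIdx m n β A → ℝ)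
    (f : RowIdx m β → ℝ) :
    ∑ w, f w * (theta m n β A).mulVec y w
      = ∑ c, y c * ((if uRow hA c ≠ vRow hA c then f (vRow hA c) else 0)
          - f (uRow hA c)) := by
  classical
  simp only [Matrix.mulVec, dotProduct, Finset.mul_sum]
  rw [Finset.sum_comm]
  refine Finset.sum_congr rfl fun c _ => ?_
  rw [← sum_col hA f c, Finset.mul_sum]
  refine Finset.sum_congr rfl fun w _ => ?_
  ring

lemma sum_mul_bvec (b : Fin m → ℕ) (hb : ∀ j, b j ≤ β j) (f : RowIdx m β → ℝ) :
    ∑ w, f w * bvec m β b w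
      = f (mkRow β b hb) - f (mkRow β (fun _ => 0) (fun _ => Nat.zero_le _)) := by
  classical
  simp only [bvec_apply b hb, mul_sub]
  rw [Finset.sum_sub_distrib]
  congr 1
  · simp only [mul_ite, mul_one, mul_zero]
    rw [Finset.sum_ite_eq' Finset.univ (mkRow β b hb) f]; simp
  · simp only [mul_ite, mul_one, mul_zero]
    rw [Finset.sum_ite_eq' Finset.univ (mkRow β (fun _ => 0) (fun _ => Nat.zero_le _)) f]
    simp

end Stmt8Aux
namespace Stmt8Aux

variable {m n : ℕ} {β : Fin m → ℕ} {A : Matrix (Fin m) (Fin n) ℕ}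

lemma bvec_zero (b' : Fin m → ℕ) (hz : ∀ j, b' j = 0) : bvec m β b' = 0 := by
  funext w
  have : b' = fun _ => (0:ℕ) := funext hz
  simp [bvec, this]

lemma forward (hA : ∀ k j, A j k ≤ β j) :
    ∀ (N : ℕ) (x : Fin n → ℕ) (b' : Fin m → ℕ), (∀ j, b' j ≤ β j) →
      (∀ j, ∑ k, A j k * x k = b' j) → (∑ k, x k ≤ N) →
      ∃ y : ColIdx m n β A → ℝ, (∀ c, 0 ≤ y c) ∧
        (theta m n β A).mulVec y = bvec m β b' := by
  classical
  intro N
  induction N with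
  | zero =>
    intro x b' hb' heq hsum
    have hx : ∀ k, x k = 0 := by
      intro k
      have := Finset.single_le_sum (f := x) (fun i _ => Nat.zero_le _) (Finset.mem_univ k)
      omega
    refine ⟨0, fun c => le_refl 0, ?_⟩
    rw [Matrix.mulVec_zero, bvec_zero b' (fun j => by
      rw [← heq j]; exact Finset.sum_eq_zero fun k _ => by rw [hx k, Nat.mul_zero])]
  | succ N ih =>
    intro x b' hb' heq hsum
    by_cases h : ∃ k, 0 < x k ∧ ∃ j, 0 < A j k
    · obtain ⟨k, hxk, j0, hj0⟩ := h
      have hAb : ∀ j, A j k ≤ b' j := by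
        intro j
        have h1 : A j k * x k ≤ ∑ k', A j k' * x k' :=
          Finset.single_le_sum (f := fun k' => A j k' * x k') (fun i _ => Nat.zero_le _)
            (Finset.mem_univ k)
        have h2 : A j k ≤ A j k * x k := Nat.le_mul_of_pos_right _ hxk
        have h3 := heq j
        omega
      set b'' : Fin m → ℕ := fun j => b' j - A j k with hb''def
      set x' : Fin n → ℕ := Function.update x k (x k - 1) with hx'def
      have hb'' : ∀ j, b'' j ≤ β j := fun j => le_trans (Nat.sub_le _ _) (hb' j)
      have heq' : ∀ j, ∑ k', A j k' * x' k' = b'' j := by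
        intro j
        have e1 : ∑ k', A j k' * x' k'
            = A j k * (x k - 1) + ∑ k' ∈ Finset.univ.erase k, A j k' * x k' := by
          rw [← Finset.add_sum_erase _ _ (Finset.mem_univ k)]
          congr 1
          · simp [hx'def]
          · refine Finset.sum_congr rfl fun i hi => ?_
            rw [hx'def, Function.update_of_ne (Finset.ne_of_mem_erase hi)]
        have e2 : A j k * x k + ∑ k' ∈ Finset.univ.erase k, A j k' * x k' = b' j :=
          (Finset.add_sum_erase Finset.univ (fun k' => A j k' * x k')
            (Finset.mem_univ k)).trans (heq j)
        have e3 : A j k * (x k - 1) + A j k = A j k * x k := by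
          have : x k - 1 + 1 = x k := Nat.succ_pred_eq_of_pos hxk
          calc A j k * (x k - 1) + A j k = A j k * (x k - 1 + 1) := by ring
            _ = A j k * x k := by rw [this]
        have := hAb j
        have hbj : b'' j = b' j - A j k := rfl
        omega
      have hsum' : ∑ k', x' k' ≤ N := by
        have e1 : ∑ k', x' k' = (x k - 1) + ∑ k' ∈ Finset.univ.erase k, x k' := by
          rw [← Finset.add_sum_erase _ _ (Finset.mem_univ k)]
          congr 1
          · simp [hx'def]
          · refine Finset.sum_congr rfl fun i hi => ?_
            rw [hx'def, Function.update_of_ne (Finset.ne_of_mem_erase hi)]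
        have e2 : x k + ∑ k' ∈ Finset.univ.erase k, x k' = ∑ k', x k' :=
          Finset.add_sum_erase Finset.univ x (Finset.mem_univ k)
        omega
      obtain ⟨y'', hy''nn, hy''⟩ := ih x' b'' hb'' heq' hsum'
      set c0 : ColIdx m n β A := ⟨k, fun j => ⟨b'' j, by
        have := hb' j; have := hAb j; simp only [hb''def]; omega⟩⟩ with hc0def
      have hu : uRow hA c0 = mkRow β b'' hb'' := by
        funext j; exact Fin.ext rfl
      have hv : vRow hA c0 = mkRow β b' hb' := by
        funext j
        refine Fin.ext ?_
        show b'' j + A j k = b' j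
        have := hAb j; simp only [hb''def]; omega
      have hne : uRow hA c0 ≠ vRow hA c0 := by
        rw [hu, hv]
        intro hcon
        have h1 := congrFun hcon j0
        have h2 : b' j0 - A j0 k = b' j0 := congrArg Fin.val h1
        have := hAb j0
        omega
      refine ⟨y'' + fun c => if c = c0 then 1 else 0, fun c => ?_, ?_⟩
      · by_cases hc : c = c0
        · have h5 := hy''nn c0
          simp [hc]
          linarith
        · simpa [hc] using hy''nn c
      · rw [Matrix.mulVec_add, hy'']
        have hsingle : (theta m n β A).mulVec (fun c => if c = c0 then 1 else 0)
            = fun w => theta m n β A w c0 := by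
          funext w
          simp [Matrix.mulVec, dotProduct, mul_ite, mul_one, mul_zero,
            Finset.sum_ite_eq' Finset.univ c0 (fun c => theta m n β A w c)]
        rw [hsingle]
        have hne' : ¬ (mkRow β b'' hb'' = mkRow β b' hb') := by
          rw [← hu, ← hv]; exact hne
        funext w
        simp only [Pi.add_apply, theta_apply hA w c0, bvec_apply b'' hb'' w,
          bvec_apply b' hb' w, hu, hv, hne', ne_eq, not_false_iff, and_true]
        ring
    · push_neg at h
      refine ⟨0, fun c => le_refl 0, ?_⟩
      rw [Matrix.mulVec_zero, bvec_zero b' (fun j => ?_)]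
      rw [← heq j]
      refine Finset.sum_eq_zero fun k _ => ?_
      rcases Nat.eq_zero_or_pos (x k) with h0 | h0
      · rw [h0, Nat.mul_zero]
      · rw [Nat.le_zero.mp (h k h0 j), Nat.zero_mul]
end Stmt8Aux
namespace Stmt8Aux

variable {m n : ℕ} {β : Fin m → ℕ} {A : Matrix (Fin m) (Fin n) ℕ}

lemma backward (hA : ∀ k j, A j k ≤ β j) (b : Fin m → ℕ) (hb : ∀ j, b j ≤ β j)
    (y : ColIdx m n β A → ℝ) (hy : ∀ c, 0 ≤ y c)
    (heq : (theta m n β A).mulVec y = bvec m β b) :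
    ∃ x : Fin n → ℕ, ∀ j, ∑ k, A j k * x k = b j := by
  classical
  have key : ∀ f : RowIdx m β → ℝ,
      f (mkRow β b hb) - f (mkRow β (fun _ => 0) (fun _ => Nat.zero_le _))
        = ∑ c, y c * ((if uRow hA c ≠ vRow hA c then f (vRow hA c) else 0)
            - f (uRow hA c)) := by
    intro f
    rw [← sum_mul_bvec b hb f, ← heq, sum_mul_mulVec hA y f]
  -- self-loop columns carry zero weight
  have hloop : ∀ c : ColIdx m n β A, uRow hA c = vRow hA c → y c = 0 := by
    have h1 := key (fun _ => (1:ℝ))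
    simp only [sub_self] at h1
    have h2 : ∑ c : ColIdx m n β A, (if uRow hA c = vRow hA c then y c else 0) = 0 := by
      have e : ∀ c : ColIdx m n β A,
          (if uRow hA c = vRow hA c then y c else 0)
            = -(y c * ((if uRow hA c ≠ vRow hA c then (1:ℝ) else 0) - 1)) := by
        intro c
        by_cases hcc : uRow hA c = vRow hA c <;> simp [hcc]
      rw [Finset.sum_congr rfl fun c _ => e c]
      rw [Finset.sum_neg_distrib, ← h1, neg_zero]
    intro c hc
    have h3 := (Finset.sum_eq_zero_iff_of_nonneg (fun c _ => by
      by_cases hcc : uRow hA c = vRow hA c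
      · simpa [hcc] using hy c
      · simp [hcc])).mp h2 c (Finset.mem_univ c)
    rwa [if_pos hc] at h3
  set zR : RowIdx m β := mkRow β (fun _ => 0) (fun _ => Nat.zero_le _) with hzR
  set R : RowIdx m β → RowIdx m β → Prop :=
    fun w w' => ∃ c : ColIdx m n β A, 0 < y c ∧ w = uRow hA c ∧ w' = vRow hA c with hR
  -- b is reachable from 0
  have hreach : Relation.ReflTransGen R zR (mkRow β b hb) := by
    by_contra hnr
    have h3 := key (fun w => if Relation.ReflTransGen R zR w then (1:ℝ) else 0)
    rw [if_neg hnr, if_pos Relation.ReflTransGen.refl] at h3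
    have h4 : 0 ≤ ∑ c : ColIdx m n β A,
        y c * ((if uRow hA c ≠ vRow hA c then
            (if Relation.ReflTransGen R zR (vRow hA c) then (1:ℝ) else 0) else 0)
          - (if Relation.ReflTransGen R zR (uRow hA c) then (1:ℝ) else 0)) := by
      refine Finset.sum_nonneg fun c _ => ?_
      by_cases hcc : uRow hA c = vRow hA c
      · rw [hloop c hcc]; simp
      · by_cases h0 : y c = 0
        · rw [h0]; simp
        · have hpos : 0 < y c := lt_of_le_of_ne (hy c) (Ne.symm h0)
          by_cases hr : Relation.ReflTransGen R zR (uRow hA c)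
          · have hrv : Relation.ReflTransGen R zR (vRow hA c) :=
              hr.tail ⟨c, hpos, rfl, rfl⟩
            simp [hcc, hr, hrv]
          · simp only [hcc, ne_eq, not_false_iff, if_true, if_neg hr, sub_zero]
            refine mul_nonneg (hy c) ?_
            split_ifs <;> norm_num
    linarith
  -- extract a solution from a path
  have hx : ∀ w : RowIdx m β, Relation.ReflTransGen R zR w →
      ∃ x : Fin n → ℕ, ∀ j, ∑ k, A j k * x k = (w j : ℕ) := by
    intro w hw
    induction hw with
    | refl =>
      exact ⟨fun _ => 0, fun j => by simp; rfl⟩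
    | @tail w1 w2 hprev hstep ih =>
      obtain ⟨x, hxx⟩ := ih
      obtain ⟨c, hc, huw, hvw⟩ := hstep
      refine ⟨Function.update x c.1 (x c.1 + 1), fun j => ?_⟩
      have e1 : ∑ k', A j k' * Function.update x c.1 (x c.1 + 1) k'
          = A j c.1 * (x c.1 + 1) + ∑ k' ∈ Finset.univ.erase c.1, A j k' * x k' := by
        rw [← Finset.add_sum_erase _ _ (Finset.mem_univ c.1)]
        congr 1
        · simp
        · refine Finset.sum_congr rfl fun i hi => ?_
          rw [Function.update_of_ne (Finset.ne_of_mem_erase hi)]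
      have e2 : A j c.1 * x c.1 + ∑ k' ∈ Finset.univ.erase c.1, A j k' * x k'
          = (w1 j : ℕ) :=
        (Finset.add_sum_erase Finset.univ (fun k' => A j k' * x k')
          (Finset.mem_univ c.1)).trans (hxx j)
      have e3 : ((w2 j : ℕ)) = (c.2 j : ℕ) + A j c.1 := by rw [hvw]; rfl
      have e4 : ((w1 j : ℕ)) = (c.2 j : ℕ) := by rw [huw]; rfl
      have e5 : A j c.1 * (x c.1 + 1) = A j c.1 * x c.1 + A j c.1 := by ring
      rw [e1]
      omega
  obtain ⟨x, hxx⟩ := hx (mkRow β b hb) hreach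
  exact ⟨x, fun j => hxx j⟩

end Stmt8Aux


/-- For any invertible `M ∈ ℝ^{s×s}`: `Ax = b` has a solution `x ∈ ℕ^n` iff
`M Θ 𝐲 = M 𝐛` for some real vector `𝐲 ≥ 0`. -/
theorem stmt_8 (m n : ℕ) (hm : 0 < m) (hn : 0 < n)
    (A : Matrix (Fin m) (Fin n) ℕ) (β b : Fin m → ℕ)
    (hb : ∀ j, b j ≤ β j) (hA : ∀ k j, A j k ≤ β j)
    (M : Matrix (RowIdx m β) (RowIdx m β) ℝ) (hM : IsUnit M) :
    (∃ x : Fin n → ℕ, ∀ j, ∑ k, A j k * x k = b j) ↔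
    (∃ y : ColIdx m n β A → ℝ, (∀ c, 0 ≤ y c) ∧
      M.mulVec ((theta m n β A).mulVec y) = M.mulVec (bvec m β b)) := by
  obtain ⟨u, hu⟩ := hM
  have hinj : Function.Injective M.mulVec := by
    intro p q hpq
    have h1 := congrArg (Matrix.mulVec (↑u⁻¹ : Matrix (RowIdx m β) (RowIdx m β) ℝ)) hpq
    rwa [Matrix.mulVec_mulVec, Matrix.mulVec_mulVec, ← hu, Units.inv_mul,
      Matrix.one_mulVec, Matrix.one_mulVec] at h1
  constructor
  · rintro ⟨x, hx⟩
    obtain ⟨y, hy1, hy2⟩ := Stmt8Aux.forward hA (∑ k, x k) x b hb hx le_rfl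
    exact ⟨y, hy1, by rw [hy2]⟩
  · rintro ⟨y, hy1, hy2⟩
    exact Stmt8Aux.backward hA b hb y hy1 (hinj hy2)
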